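/- Let K be a field of characteristic zero and n ≥ 1. If f ∈ K⟨X⟩ is a traceless polynomial of M_n(K), i.e., every evaluation of f at elements of M_n(K) has trace zero, then f is cyclically equivalent to a polynomial identity of M_n(K); that is, there exists g ∈ K⟨X⟩ which is a polynomial identity of M_n(K) such that f − g is a sum of commutators [u, v] = uv − vu with u, v ∈ K⟨X⟩. -/

import Mathlib

open Polynomial

namespace TCE

variable {K : Type*} [Field K]

noncomputable def ev {K : Type*} [Field K] {B : Type*} [Semiring B] [Algebra K B]
    (m : ℕ → B) : MonoidAlgebra K (FreeMonoid ℕ) →ₐ[K] B :=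
  MonoidAlgebra.lift K B (FreeMonoid ℕ) (FreeMonoid.lift m)

def wp {B : Type*} [Semiring B] (m : ℕ → B) (l : List ℕ) : B := (l.map m).prod

lemma ev_single {B : Type*} [Semiring B] [Algebra K B] (m : ℕ → B) (l : List ℕ) (c : K) :
    ev m (MonoidAlgebra.single (FreeMonoid.ofList l) c) = c • wp m l := by
  rw [ev, MonoidAlgebra.lift_single, FreeMonoid.lift_apply]
  rfl

lemma wp_cons {B : Type*} [Semiring B] (m : ℕ → B) (h : ℕ) (t : List ℕ) :
    wp m (h :: t) = m h * wp m t := by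
  simp [wp]

end TCE
namespace TCE2
open TCE Polynomial

variable {K : Type*} [Field K]

/-- span of commutators -/
def Cspan (R : Type*) [Ring R] (K : Type*) [Field K] [Algebra K R] : Submodule K R :=
  Submodule.span K {x : R | ∃ u v : R, x = u * v - v * u}

lemma mem_Cspan_of_comm {R : Type*} [Ring R] [Algebra K R] (u v : R) :
    u * v - v * u ∈ Cspan R K := Submodule.subset_span ⟨u, v, rfl⟩

lemma Cspan_exists_list {R : Type*} [Ring R] [Algebra K R] {x : R} (hx : x ∈ Cspan R K) :
    ∃ l : List (R × R), x = (l.map fun p => p.1 * p.2 - p.2 * p.1).sum := by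
  refine Submodule.span_induction ?_ ?_ ?_ ?_ hx
  · rintro y ⟨u, v, rfl⟩; exact ⟨[(u, v)], by simp⟩
  · exact ⟨[], by simp⟩
  · rintro y z - - ⟨l1, rfl⟩ ⟨l2, rfl⟩
    exact ⟨l1 ++ l2, by simp⟩
  · rintro c y - ⟨l, rfl⟩
    refine ⟨l.map fun p => (c • p.1, p.2), ?_⟩
    rw [List.map_map, List.smul_sum, List.map_map]
    refine congrArg _ (List.map_congr_left fun p _ => ?_)
    simp [smul_sub, smul_mul_assoc]

end TCE2
namespace TCE3
open TCE Polynomial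

variable {K : Type*} [Field K] [CharZero K] {n : ℕ}

lemma key (p : (Matrix (Fin n) (Fin n) K)[X])
    (h : ∀ t : K, Matrix.trace (Polynomial.eval₂ (RingHom.id _) (t • (1 : Matrix (Fin n) (Fin n) K)) p) = 0)
    (k : ℕ) : Matrix.trace (p.coeff k) = 0 := by
  set q : K[X] := ∑ j ∈ p.support, C (Matrix.trace (p.coeff j)) * X ^ j with hq
  have hqe : ∀ t : K, q.eval t = 0 := by
    intro t
    have h1 : Polynomial.eval₂ (RingHom.id _) (t • (1 : Matrix (Fin n) (Fin n) K)) p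
        = ∑ j ∈ p.support, t ^ j • p.coeff j := by
      rw [Polynomial.eval₂_eq_sum, Polynomial.sum_def]
      refine Finset.sum_congr rfl fun j _ => ?_
      rw [_root_.smul_pow, one_pow, mul_smul_comm, mul_one]; rfl
    have := h t
    rw [h1, Matrix.trace_sum] at this
    rw [hq, Polynomial.eval_finset_sum]
    rw [show (0:K) = ∑ j ∈ p.support, Matrix.trace (t ^ j • p.coeff j) from this.symm]
    refine Finset.sum_congr rfl fun j _ => ?_
    rw [Matrix.trace_smul, eval_mul, eval_pow, eval_C, eval_X, smul_eq_mul, mul_comm]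
  have hq0 : q = 0 := Polynomial.funext (by simpa using hqe)
  by_cases hk : k ∈ p.support
  · have : q.coeff k = Matrix.trace (p.coeff k) := by
      rw [hq, Polynomial.finset_sum_coeff]
      rw [Finset.sum_eq_single k]
      · simp [coeff_C_mul, coeff_X_pow]
      · intro j _ hj; simp [coeff_C_mul, coeff_X_pow, (Ne.symm hj)]
      · intro hnk; exact absurd hk hnk
    rw [← this, hq0]; simp
  · rw [Polynomial.notMem_support_iff.mp hk]; simp

end TCE3
namespace TCE4
open TCE Polynomial

variable {K : Type*} [Field K] {B : Type*} [Ring B] [Algebra K B]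

lemma wp_nil (m : ℕ → B) : wp m [] = 1 := rfl

lemma wp_append (m : ℕ → B) (l1 l2 : List ℕ) : wp m (l1 ++ l2) = wp m l1 * wp m l2 := by
  simp [wp]

lemma coeff_mul_one' (p q : B[X]) :
    (p * q).coeff 1 = p.coeff 0 * q.coeff 1 + p.coeff 1 * q.coeff 0 := by
  rw [Polynomial.coeff_mul]
  have h1 : Finset.HasAntidiagonal.antidiagonal (1 : ℕ) = {(0, 1), (1, 0)} := rfl
  rw [h1, Finset.sum_pair (by decide)]

lemma wp_scaleX (m : ℕ → B) (l : List ℕ) :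
    wp (fun j => (X : B[X]) * C (m j)) l = X ^ l.length * C (wp m l) := by
  induction l with
  | nil => simp [wp_nil]
  | cons h t ih =>
    rw [wp_cons, ih, wp_cons, map_mul]
    rw [mul_assoc, ← mul_assoc (C (m h)), ← Polynomial.X_pow_mul, mul_assoc, ← mul_assoc X,
      ← pow_succ']
    rfl

lemma coeff_wp_scaleX (m : ℕ → B) (l : List ℕ) (d : ℕ) :
    (wp (fun j => (X : B[X]) * C (m j)) l).coeff d
      = if l.length = d then wp m l else 0 := by
  rw [wp_scaleX, Polynomial.X_pow_mul, Polynomial.coeff_C_mul, Polynomial.coeff_X_pow]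
  by_cases h : l.length = d
  · simp [h]
  · rw [if_neg (fun hd => h hd.symm), if_neg h, mul_zero]

/-- the perturbed assignment -/
noncomputable def bh (m : ℕ → B) (b : B) (i : ℕ) : ℕ → B[X] :=
  fun j => C (m j) + if j = i then X * C b else 0

lemma coeff0_bh (m : ℕ → B) (b : B) (i j : ℕ) : (bh m b i j).coeff 0 = m j := by
  by_cases h : j = i <;> simp [bh, h]

lemma coeff0_wp_bh (m : ℕ → B) (b : B) (i : ℕ) (l : List ℕ) :
    (wp (bh m b i) l).coeff 0 = wp m l := by
  induction l with
  | nil => simp [wp_nil]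
  | cons h t ih => rw [wp_cons, wp_cons, Polynomial.mul_coeff_zero, ih, coeff0_bh]

lemma coeff1_bh (m : ℕ → B) (b : B) (i j : ℕ) :
    (bh m b i j).coeff 1 = if j = i then b else 0 := by
  by_cases h : j = i <;> simp [bh, h]

lemma coeff1_wp_bh (m : ℕ → B) (b : B) (i : ℕ) (l : List ℕ) :
    (wp (bh m b i) l).coeff 1 =
      ∑ p : Fin l.length,
        if l.get p = i then wp m (l.take p) * b * wp m (l.drop (p + 1)) else 0 := by
  induction l with
  | nil => simp [wp_nil, Polynomial.coeff_one]
  | cons h t ih =>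
    rw [wp_cons, coeff_mul_one', ih, coeff0_bh, coeff1_bh, coeff0_wp_bh]
    have e1 : (m h) * (∑ p : Fin t.length,
          if t.get p = i then wp m (t.take p) * b * wp m (t.drop (p + 1)) else 0)
        = ∑ p : Fin t.length,
          if t.get p = i then wp m (h :: t.take p) * b * wp m (t.drop (p + 1)) else 0 := by
      rw [Finset.mul_sum]
      refine Finset.sum_congr rfl fun p _ => ?_
      by_cases hp : t.get p = i <;> simp [hp, wp_cons, mul_assoc]
    have e2 : (if h = i then b else 0) * wp m t
        = (if h = i then wp m [] * b * wp m t else 0) := by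
      by_cases hh : h = i <;> simp [hh, wp_nil]
    rw [e1, e2]
    simp only [List.length_cons, Fin.sum_univ_succ, Fin.val_succ, Fin.val_zero,
      List.get_cons_zero, List.get_cons_succ, List.take_zero, List.take_succ_cons,
      List.drop_succ_cons, List.drop_one]
    exact add_comm _ _


end TCE4
namespace TCE5
open TCE TCE4 Polynomial

variable {K : Type*} [Field K] {B : Type*} [Ring B] [Algebra K B]

noncomputable def Psi (K : Type*) [Field K] {B : Type*} [Ring B] [Algebra K B] (t : K) :
    B[X] →+* B :=
  Polynomial.eval₂RingHom' (RingHom.id B) (t • (1 : B))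
    (fun a => (Commute.one_right a).smul_right t)

lemma Psi_apply (t : K) (p : B[X]) :
    Psi K t p = Polynomial.eval₂ (RingHom.id B) (t • (1 : B)) p := rfl

lemma Psi_C (t : K) (x : B) : Psi K t (C x) = x := eval₂_C _ _

lemma Psi_X (t : K) : Psi K (B := B) t X = t • 1 := eval₂_X _ _

lemma Psi_smul (t c : K) (p : B[X]) : Psi K t (c • p) = c • Psi K t p := by
  rw [Algebra.smul_def, map_mul, Polynomial.algebraMap_apply, Psi_C, ← Algebra.smul_def]

lemma Psi_wp_scale (t : K) (m : ℕ → B) (l : List ℕ) :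
    Psi K t (wp (fun j => (X : B[X]) * C (m j)) l) = wp (fun j => t • m j) l := by
  induction l with
  | nil => simp [wp_nil]
  | cons h tl ih =>
    rw [wp_cons, map_mul, ih, map_mul, Psi_X, Psi_C, wp_cons, smul_mul_assoc, one_mul]

lemma Psi_wp_bh (t : K) (m : ℕ → B) (b : B) (i : ℕ) (l : List ℕ) :
    Psi K t (wp (bh m b i) l) = wp (fun j => m j + if j = i then t • b else 0) l := by
  induction l with
  | nil => simp [wp_nil]
  | cons h tl ih =>
    rw [wp_cons, map_mul, ih, wp_cons]
    congr 1
    rw [bh, map_add, Psi_C, apply_ite (Psi K t), map_zero, map_mul, Psi_X, Psi_C,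
      smul_mul_assoc, one_mul]

lemma ev_finsum (m : ℕ → B) (T : Finset (FreeMonoid ℕ)) (c : FreeMonoid ℕ → K) :
    ev m (∑ w ∈ T, MonoidAlgebra.single w (c w)) = ∑ w ∈ T, c w • wp m w.toList := by
  rw [map_sum]
  refine Finset.sum_congr rfl fun w _ => ?_
  rw [show MonoidAlgebra.single w (c w)
      = MonoidAlgebra.single (FreeMonoid.ofList w.toList) (c w) from rfl, ev_single]

lemma self_eq_sum_single (f : MonoidAlgebra K (FreeMonoid ℕ)) :
    f = ∑ w ∈ f.coeff.support, MonoidAlgebra.single w (f.coeff w) := by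
  conv_lhs => rw [← MonoidAlgebra.sum_coeff_single f]
  rw [Finsupp.sum]

lemma ev_eq_sum {B : Type*} [Ring B] [Algebra K B] (m : ℕ → B)
    (f : MonoidAlgebra K (FreeMonoid ℕ)) :
    ev m f = ∑ w ∈ f.coeff.support, f.coeff w • wp m w.toList := by
  conv_lhs => rw [self_eq_sum_single f]
  exact ev_finsum m _ _

end TCE5
namespace TCE6
open TCE TCE2 TCE3 TCE4 TCE5 Polynomial

variable {K : Type*} [Field K] [CharZero K] {n : ℕ}

abbrev Mx (K : Type*) [Field K] (n : ℕ) := Matrix (Fin n) (Fin n) K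

lemma trace_nondeg (M0 : Mx K n) (h : ∀ b : Mx K n, (b * M0).trace = 0) : M0 = 0 := by
  ext r c
  have := h (Matrix.single c r 1)
  rw [Matrix.trace] at this
  rw [Finset.sum_eq_single c (fun k _ hk => by simp [Matrix.diag, hk]) (by simp)] at this
  simpa [Matrix.diag] using this

/-- degree-`d` component of `f` -/
noncomputable def comp (f : MonoidAlgebra K (FreeMonoid ℕ)) (d : ℕ) :
    MonoidAlgebra K (FreeMonoid ℕ) :=
  ∑ w ∈ f.coeff.support.filter (fun w => w.toList.length = d), MonoidAlgebra.single w (f.coeff w)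

lemma ev_comp {B : Type*} [Ring B] [Algebra K B] (m : ℕ → B)
    (f : MonoidAlgebra K (FreeMonoid ℕ)) (d : ℕ) :
    ev m (comp f d) = ∑ w ∈ f.coeff.support.filter (fun w => w.toList.length = d),
      f.coeff w • wp m w.toList := ev_finsum m _ _

/-- each homogeneous component of a traceless polynomial is traceless -/
lemma comp_traceless (f : MonoidAlgebra K (FreeMonoid ℕ))
    (htl : ∀ a : ℕ → Mx K n, (ev a f).trace = 0) (d : ℕ) :
    ∀ a : ℕ → Mx K n, (ev a (comp f d)).trace = 0 := by
  intro a
  have hkey := key (ev (fun j => (X : (Mx K n)[X]) * C (a j)) f) ?_ d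
  · rw [ev_comp]
    rw [ev_eq_sum] at hkey
    rw [Polynomial.finset_sum_coeff] at hkey
    have e : ∀ w ∈ f.coeff.support,
        (f.coeff w • wp (fun j => (X : (Mx K n)[X]) * C (a j)) w.toList).coeff d
          = if w.toList.length = d then f.coeff w • wp a w.toList else 0 := by
      intro w _
      rw [Polynomial.coeff_smul, coeff_wp_scaleX]
      by_cases hw : w.toList.length = d <;> simp [hw]
    rw [Finset.sum_congr rfl e, ← Finset.sum_filter] at hkey
    exact hkey
  · intro t
    rw [← Psi_apply]
    rw [ev_eq_sum, map_sum]
    have e : ∀ w ∈ f.coeff.support,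
        Psi K t (f.coeff w • wp (fun j => (X : (Mx K n)[X]) * C (a j)) w.toList)
          = f.coeff w • wp (fun j => t • a j) w.toList := by
      intro w _
      rw [Psi_smul, Psi_wp_scale]
    rw [Finset.sum_congr rfl e, ← ev_eq_sum]
    exact htl _

end TCE6
namespace TCE7
open TCE TCE2 TCE3 TCE4 TCE5 TCE6 Polynomial

variable {K : Type*} [Field K] [CharZero K] {n : ℕ}

/-- cyclic derivative of a word w.r.t. variable `i` -/
noncomputable def Dw (K : Type*) [Field K] (i : ℕ) (l : List ℕ) :
    MonoidAlgebra K (FreeMonoid ℕ) :=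
  ∑ p : Fin l.length, if l.get p = i then
      MonoidAlgebra.single (FreeMonoid.ofList (l.drop (p + 1) ++ l.take p)) 1 else 0

lemma ev_Dw {B : Type*} [Ring B] [Algebra K B] (m : ℕ → B) (i : ℕ) (l : List ℕ) :
    ev m (Dw K i l) = ∑ p : Fin l.length,
      if l.get p = i then wp m (l.drop (p + 1) ++ l.take p) else 0 := by
  rw [Dw, map_sum]
  refine Finset.sum_congr rfl fun p _ => ?_
  rw [apply_ite (ev m), ev_single, one_smul, map_zero]

/-- cyclic derivative of the degree-`d` component of `f` -/
noncomputable def Dcomp (f : MonoidAlgebra K (FreeMonoid ℕ)) (d i : ℕ) :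
    MonoidAlgebra K (FreeMonoid ℕ) :=
  ∑ w ∈ f.coeff.support.filter (fun w => w.toList.length = d), f.coeff w • Dw K i w.toList

lemma ev_Dcomp {B : Type*} [Ring B] [Algebra K B] (m : ℕ → B)
    (f : MonoidAlgebra K (FreeMonoid ℕ)) (d i : ℕ) :
    ev m (Dcomp f d i) = ∑ w ∈ f.coeff.support.filter (fun w => w.toList.length = d),
      f.coeff w • ev m (Dw K i w.toList) := by
  rw [Dcomp, map_sum]
  exact Finset.sum_congr rfl fun w _ => map_smul _ _ _

/-- the cyclic derivatives of a traceless homogeneous component are polynomial identities -/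
lemma Dcomp_PI (f : MonoidAlgebra K (FreeMonoid ℕ)) (d i : ℕ)
    (hc : ∀ a : ℕ → Mx K n, (ev a (comp f d)).trace = 0) :
    ∀ a : ℕ → Mx K n, ev a (Dcomp f d i) = 0 := by
  intro a
  apply trace_nondeg
  intro b
  have hkey := key (ev (bh a b i) (comp f d)) ?_ 1
  · -- identify trace(coeff 1) with trace (b * ev a (Dcomp f d i))
    rw [ev_comp, Polynomial.finset_sum_coeff] at hkey
    have e : ∀ w ∈ f.coeff.support.filter (fun w => w.toList.length = d),
        ((f.coeff w • wp (bh a b i) w.toList).coeff 1).trace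
          = (b * (f.coeff w • ev a (Dw K i w.toList))).trace := by
      intro w _
      rw [Polynomial.coeff_smul, coeff1_wp_bh, ev_Dw]
      rw [Matrix.trace_smul, mul_smul_comm, Matrix.trace_smul]
      congr 1
      rw [Matrix.trace_sum, Finset.mul_sum, Matrix.trace_sum]
      refine Finset.sum_congr rfl fun p _ => ?_
      by_cases hp : w.toList.get p = i
      · rw [if_pos hp, if_pos hp, wp_append, ← mul_assoc, Matrix.trace_mul_comm,
          mul_assoc, ← mul_assoc, Matrix.trace_mul_comm]
      · rw [if_neg hp, if_neg hp, mul_zero, Matrix.trace_zero]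
    rw [Matrix.trace_sum, Finset.sum_congr rfl e] at hkey
    rw [ev_Dcomp, Finset.mul_sum, Matrix.trace_sum]
    exact hkey
  · intro t
    rw [← Psi_apply, ev_comp, map_sum]
    have e : ∀ w ∈ f.coeff.support.filter (fun w => w.toList.length = d),
        Psi K t (f.coeff w • wp (bh a b i) w.toList)
          = f.coeff w • wp (fun j => a j + if j = i then t • b else 0) w.toList := by
      intro w _
      rw [Psi_smul, Psi_wp_bh]
    rw [Finset.sum_congr rfl e, ← ev_comp]
    exact hc _

end TCE7
namespace TCE8
open TCE TCE2 TCE3 TCE4 TCE5 TCE6 TCE7 Polynomial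

variable {K : Type*} [Field K]

lemma single_mul_single' (u v : List ℕ) :
    (MonoidAlgebra.single (FreeMonoid.ofList u) (1:K))
      * MonoidAlgebra.single (FreeMonoid.ofList v) 1
    = MonoidAlgebra.single (FreeMonoid.ofList (u ++ v)) 1 := by
  rw [MonoidAlgebra.single_mul_single, one_mul]
  rfl

lemma rot_mem_Cspan (l : List ℕ) (p : ℕ) :
    MonoidAlgebra.single (FreeMonoid.ofList (l.drop p ++ l.take p)) (1:K)
      - MonoidAlgebra.single (FreeMonoid.ofList l) 1
        ∈ Cspan (MonoidAlgebra K (FreeMonoid ℕ)) K := by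
  have h1 := single_mul_single' (K := K) (l.drop p) (l.take p)
  have h2 := single_mul_single' (K := K) (l.take p) (l.drop p)
  rw [List.take_append_drop] at h2
  rw [← h1, ← h2]
  exact mem_Cspan_of_comm _ _

lemma cyc_word (S : Finset ℕ) (l : List ℕ) (hS : ∀ x ∈ l, x ∈ S) :
    (∑ i ∈ S, MonoidAlgebra.single (FreeMonoid.ofList [i]) (1:K) * Dw K i l)
      - (l.length : K) • MonoidAlgebra.single (FreeMonoid.ofList l) 1
        ∈ Cspan (MonoidAlgebra K (FreeMonoid ℕ)) K := by
  have e1 : (∑ i ∈ S, MonoidAlgebra.single (FreeMonoid.ofList [i]) (1:K) * Dw K i l)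
      = ∑ p : Fin l.length,
          MonoidAlgebra.single (FreeMonoid.ofList (l.drop p ++ l.take p)) 1 := by
    simp only [Dw, Finset.mul_sum, mul_ite, mul_zero]
    rw [Finset.sum_comm]
    refine Finset.sum_congr rfl fun p _ => ?_
    have e2 : ∀ i ∈ S, (if l.get p = i then
        MonoidAlgebra.single (FreeMonoid.ofList [i]) (1:K)
          * MonoidAlgebra.single (FreeMonoid.ofList (l.drop (p + 1) ++ l.take p)) 1 else 0)
        = (if l.get p = i then
          MonoidAlgebra.single (FreeMonoid.ofList (l.get p :: (l.drop (p + 1) ++ l.take p)))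
            1 else 0) := by
      intro i _
      by_cases hp : l.get p = i
      · rw [if_pos hp, if_pos hp, single_mul_single']
        subst hp
        rfl
      · rw [if_neg hp, if_neg hp]
    rw [Finset.sum_congr rfl e2, Finset.sum_ite_eq, if_pos (hS _ (l.get_mem p))]
    congr 2
    rw [← List.cons_append, List.cons_get_drop_succ]
  rw [e1]
  have e3 : (l.length : K) • (MonoidAlgebra.single (FreeMonoid.ofList l) (1:K))
      = ∑ _p : Fin l.length, MonoidAlgebra.single (FreeMonoid.ofList l) (1:K) := by
    rw [Finset.sum_const, Finset.card_univ, Fintype.card_fin, Nat.cast_smul_eq_nsmul]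
  rw [e3, ← Finset.sum_sub_distrib]
  exact Submodule.sum_mem _ fun p _ => rot_mem_Cspan l p

end TCE8
namespace TCE9
open TCE TCE2 TCE3 TCE4 TCE5 TCE6 TCE7 TCE8

variable {K : Type*} [Field K] [CharZero K] {n : ℕ}

noncomputable def G (f : MonoidAlgebra K (FreeMonoid ℕ)) (S : Finset ℕ) (d : ℕ) :
    MonoidAlgebra K (FreeMonoid ℕ) :=
  ∑ i ∈ S, MonoidAlgebra.single (FreeMonoid.ofList [i]) (1:K) * Dcomp f d i

lemma G_sub (f : MonoidAlgebra K (FreeMonoid ℕ)) (S : Finset ℕ) (d : ℕ) :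
    G f S d - (d:K) • comp f d
      = ∑ w ∈ f.coeff.support.filter (fun w => w.toList.length = d),
          f.coeff w • ((∑ i ∈ S, MonoidAlgebra.single (FreeMonoid.ofList [i]) (1:K)
              * Dw K i w.toList)
            - (d:K) • MonoidAlgebra.single w 1) := by
  rw [G, TCE6.comp]
  simp only [Dcomp, Finset.mul_sum, mul_smul_comm]
  rw [Finset.sum_comm, Finset.smul_sum, ← Finset.sum_sub_distrib]
  refine Finset.sum_congr rfl fun w _ => ?_
  rw [smul_sub, Finset.smul_sum]
  congr 1
  simp [MonoidAlgebra.smul_single', mul_comm]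

lemma G_sub_mem (f : MonoidAlgebra K (FreeMonoid ℕ)) (d : ℕ) :
    G f (f.coeff.support.sup fun w => w.toList.toFinset) d - (d:K) • comp f d
      ∈ Cspan (MonoidAlgebra K (FreeMonoid ℕ)) K := by
  rw [G_sub]
  refine Submodule.sum_mem _ fun w hw => Submodule.smul_mem _ _ ?_
  rw [Finset.mem_filter] at hw
  have hlen : ((w.toList.length : ℕ) : K) = (d : K) := by rw [hw.2]
  rw [← hlen]
  exact cyc_word _ w.toList fun x hx =>
    Finset.le_sup (f := fun w => (FreeMonoid.toList w).toFinset) hw.1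
      (List.mem_toFinset.mpr hx)

lemma comp_zero_eq (hn : 1 ≤ n) (f : MonoidAlgebra K (FreeMonoid ℕ))
    (htl : ∀ a : ℕ → Mx K n, (ev a f).trace = 0) : comp f 0 = 0 := by
  have h1 : comp f 0 = MonoidAlgebra.single (1 : FreeMonoid ℕ) (f.coeff 1) := by
    rw [TCE6.comp]
    by_cases h : (1 : FreeMonoid ℕ) ∈ f.coeff.support
    · rw [show f.coeff.support.filter (fun w => w.toList.length = 0) = {1} from ?_,
        Finset.sum_singleton]
      apply Finset.ext; intro w
      simp only [Finset.mem_filter, Finset.mem_singleton]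
      constructor
      · rintro ⟨-, hw⟩
        have hw' : w.toList = [] := List.length_eq_zero_iff.mp hw
        show w = 1
        rw [← FreeMonoid.ofList_toList w, hw']
        rfl
      · rintro rfl
        exact ⟨h, rfl⟩
    · rw [Finset.filter_false_of_mem, Finset.sum_empty,
        Finsupp.notMem_support_iff.mp h]
      · simp
      intro w hw hlen
      have hw' : w.toList = [] := List.length_eq_zero_iff.mp hlen
      have : w = 1 := by rw [← FreeMonoid.ofList_toList w, hw']; rfl
      exact h (this ▸ hw)
  have h2 := comp_traceless f htl 0 (fun _ => (0 : Mx K n))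
  rw [h1] at h2
  have h3 : ev (fun _ => (0 : Mx K n)) (MonoidAlgebra.single (1 : FreeMonoid ℕ) (f.coeff 1))
      = f.coeff 1 • 1 := by
    have := ev_single (K := K) (fun _ => (0 : Mx K n)) [] (f.coeff 1)
    rw [show MonoidAlgebra.single (1 : FreeMonoid ℕ) (f.coeff 1)
      = MonoidAlgebra.single (FreeMonoid.ofList []) (f.coeff 1) from rfl, this, wp_nil]
  rw [h3, Matrix.trace_smul, Matrix.trace_one] at h2
  have hn0 : ((n : K)) ≠ 0 := Nat.cast_ne_zero.mpr (by omega)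
  have hf1 : f.coeff 1 = 0 := by
    simp only [Fintype.card_fin, smul_eq_mul] at h2
    rcases mul_eq_zero.mp h2 with h | h
    · exact h
    · exact absurd h hn0
  rw [h1, hf1]
  simp

theorem main_MA (n : ℕ) (hn : 1 ≤ n) (f : MonoidAlgebra K (FreeMonoid ℕ))
    (htl : ∀ a : ℕ → Mx K n, (ev a f).trace = 0) :
    ∃ g : MonoidAlgebra K (FreeMonoid ℕ),
      (∀ a : ℕ → Mx K n, ev a g = 0) ∧
        f - g ∈ Cspan (MonoidAlgebra K (FreeMonoid ℕ)) K := by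
  classical
  set S := f.coeff.support.sup (fun w => w.toList.toFinset) with hS
  set N := f.coeff.support.sup (fun w => w.toList.length) with hN
  refine ⟨∑ d ∈ Finset.range (N + 1), ((d : K)⁻¹ • G f S d), ?_, ?_⟩
  · intro a
    rw [map_sum]
    refine Finset.sum_eq_zero fun d _ => ?_
    rw [map_smul, G, map_sum]
    rw [Finset.sum_eq_zero fun i _ => ?_, smul_zero]
    rw [map_mul, Dcomp_PI f d i (comp_traceless f htl d) a, mul_zero]
  · have hf : f = ∑ d ∈ Finset.range (N + 1), comp f d := by
      conv_lhs => rw [self_eq_sum_single f]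
      simp only [TCE6.comp]
      exact (Finset.sum_fiberwise_of_maps_to
        (fun w hw => Finset.mem_range.mpr (Nat.lt_succ_of_le (Finset.le_sup hw))) _).symm
    nth_rewrite 1 [hf]
    rw [← Finset.sum_sub_distrib]
    refine Submodule.sum_mem _ fun d _ => ?_
    by_cases hd0 : d = 0
    · subst hd0
      rw [comp_zero_eq hn f htl]
      simp only [Nat.cast_zero, inv_zero, zero_smul, sub_zero]
      exact Submodule.zero_mem _
    · have hdK : ((d : K)) ≠ 0 := Nat.cast_ne_zero.mpr hd0
      have h1 := Submodule.smul_mem _ (-(d : K)⁻¹) (G_sub_mem f d)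
      have e : (-(d : K)⁻¹) • (G f S d - (d : K) • comp f d)
          = comp f d - (d : K)⁻¹ • G f S d := by
        rw [smul_sub, smul_smul, neg_mul, inv_mul_cancel₀ hdK, neg_smul, neg_smul,
          one_smul, sub_neg_eq_add, neg_add_eq_sub]
      rw [e] at h1
      exact h1

end TCE9
open TCE TCE2 TCE5 TCE6 TCE9 in
/-- Over a field of characteristic zero, a traceless polynomial of `M_n(K)` is cyclically
equivalent to a polynomial identity of `M_n(K)`: there is a polynomial identity `g` of
`M_n(K)` such that `f - g` is a finite sum of commutators in `K⟨X⟩`. -/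
theorem traceless_cyclically_equivalent_to_identity {K : Type*} [Field K] [CharZero K]
    (n : ℕ) (hn : 1 ≤ n) (f : FreeAlgebra K ℕ)
    (htl : ∀ a : ℕ → Matrix (Fin n) (Fin n) K,
        Matrix.trace (FreeAlgebra.lift K a f) = 0) :
    ∃ g : FreeAlgebra K ℕ,
      (∀ a : ℕ → Matrix (Fin n) (Fin n) K, FreeAlgebra.lift K a g = 0) ∧
        ∃ l : List (FreeAlgebra K ℕ × FreeAlgebra K ℕ),
          f - g = (l.map fun p => p.1 * p.2 - p.2 * p.1).sum := by
  classical
  set e := FreeAlgebra.equivMonoidAlgebraFreeMonoid (R := K) (X := ℕ) with he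
  have hcomp : ∀ (a : ℕ → Matrix (Fin n) (Fin n) K) (x : FreeAlgebra K ℕ),
      FreeAlgebra.lift K a x = ev a (e x) := by
    intro a x
    have h2 : (ev (K := K) a).comp e.toAlgHom = FreeAlgebra.lift K a := by
      apply FreeAlgebra.hom_ext
      funext j
      show ev a (e (FreeAlgebra.ι K j)) = FreeAlgebra.lift K a (FreeAlgebra.ι K j)
      rw [FreeAlgebra.lift_ι_apply]
      have h3 : e (FreeAlgebra.ι K j)
          = MonoidAlgebra.single (FreeMonoid.ofList [j]) (1 : K) := by
        rw [he, FreeAlgebra.equivMonoidAlgebraFreeMonoid]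
        simp [FreeAlgebra.lift_ι_apply]
      rw [h3, ev_single]
      simp [TCE.wp]
    conv_lhs => rw [← h2]
    rfl
  obtain ⟨g, hgPI, hgC⟩ := main_MA (K := K) n hn (e f) (fun a => by
    rw [← hcomp]; exact htl a)
  refine ⟨e.symm g, fun a => ?_, ?_⟩
  · rw [hcomp a, AlgEquiv.apply_symm_apply]
    exact hgPI a
  · obtain ⟨l, hl⟩ := Cspan_exists_list hgC
    refine ⟨l.map (fun p => (e.symm p.1, e.symm p.2)), ?_⟩
    have h4 : f - e.symm g = e.symm (e f - g) := by
      rw [map_sub, AlgEquiv.symm_apply_apply]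
    rw [h4, hl]
    rw [map_list_sum, List.map_map, List.map_map]
    refine congrArg _ (List.map_congr_left fun p _ => ?_)
    simp
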